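/- With notation as in the Eichler-trick setup: let M ∈ K^{m×m} be symmetric, τ = (τ_1,…,τ_d) a tuple of complex symmetric n×n matrices, Z_0(τ) the block matrix whose (i,j) block (1 ≤ i,j ≤ n) is diag(τ_{i,j}^{(1)} M^{(1)}, …, τ_{i,j}^{(d)} M^{(d)}), and Z_1(τ) = ᵗG' Z_0(τ) G'. Then for every U ∈ K^{m×n}, Σ_{w=1}^d σ(M[U]^{(w)} τ^{(w)}) = ᵗφ'(U) Z_1(τ) φ'(U), where M[U] = ᵗU M U and σ is the matrix trace. -/

import Mathlib

open Matrix Kronecker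

/-- Eichler-trick quadratic identity: `Σ_w σ(M[U]^{(w)} τ^{(w)}) = ᵗφ'(U) Z₁(τ) φ'(U)`,
where `Z₀(τ)` has `(i,j)` block `diag(τ_{i,j}^{(1)} M^{(1)}, …, τ_{i,j}^{(d)} M^{(d)})` and
`Z₁(τ) = ᵗG' Z₀(τ) G'` for `G' = I_n ⊗ G ⊗ I_m`. -/
theorem eichler_quadratic_identity
    (K : Type*) [Field K] [NumberField K] (d m n : ℕ)
    (hd : Module.finrank ℚ K = d)
    (γ : Module.Basis (Fin d) ℤ (NumberField.RingOfIntegers K))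
    (ψ : Fin d → (K →+* ℝ)) (hψ : Function.Injective ψ)
    (M : Matrix (Fin m) (Fin m) K) (hM : Mᵀ = M)
    (τ : Fin d → Matrix (Fin n) (Fin n) ℂ) (hτ : ∀ w, (τ w)ᵀ = τ w)
    (U : Matrix (Fin m) (Fin n) K)
    (c : Fin m → Fin d → Fin n → ℚ)
    (hc : ∀ (i : Fin m) (w : Fin n),
      U i w = ∑ j : Fin d, (c i j w : K) * algebraMap (NumberField.RingOfIntegers K) K (γ j))
    (G : Matrix (Fin d) (Fin d) ℝ)
    (hG : ∀ i j, G i j = ψ i (algebraMap (NumberField.RingOfIntegers K) K (γ j)))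
    (G' : Matrix ((Fin n × Fin d) × Fin m) ((Fin n × Fin d) × Fin m) ℝ)
    (hG' : G' = (1 : Matrix (Fin n) (Fin n) ℝ) ⊗ₖ G ⊗ₖ (1 : Matrix (Fin m) (Fin m) ℝ))
    (φ' : (Fin n × Fin d) × Fin m → ℂ)
    (hφ' : ∀ (w : Fin n) (j : Fin d) (i : Fin m), φ' ((w, j), i) = (c i j w : ℂ))
    (Z₀ : Matrix ((Fin n × Fin d) × Fin m) ((Fin n × Fin d) × Fin m) ℂ)
    (hZ₀ : ∀ (i j : Fin n) (w w' : Fin d) (s t : Fin m),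
      Z₀ ((i, w), s) ((j, w'), t) =
        if w = w' then τ w i j * (ψ w (M s t) : ℂ) else 0)
    (Z₁ : Matrix ((Fin n × Fin d) × Fin m) ((Fin n × Fin d) × Fin m) ℂ)
    (hZ₁ : Z₁ = (G'.map Complex.ofReal)ᵀ * Z₀ * G'.map Complex.ofReal) :
    ∑ w : Fin d,
        Matrix.trace (((Uᵀ * M * U).map fun x => ((ψ w x : ℝ) : ℂ)) * τ w)
      = φ' ⬝ᵥ Z₁.mulVec φ' := by
  have hτ' : ∀ w i j, τ w j i = τ w i j := fun w i j => by
    conv_lhs => rw [← hτ w]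
    rfl
  have hU : ∀ (w : Fin d) (s : Fin m) (x : Fin n),
      ψ w (U s x) = ∑ p, (c s p x : ℝ) * G w p := by
    intro w s x
    rw [hc]
    simp [map_sum, _root_.map_mul, hG, map_ratCast]
  have hZ : ∀ (i j : Fin n) (p q : Fin d) (s t : Fin m),
      Z₁ ((i,p),s) ((j,q),t)
        = ∑ w, (G w p : ℂ) * (G w q : ℂ) * (τ w i j * (ψ w (M s t) : ℂ)) := by
    intro i j p q s t
    subst hZ₁ hG'
    simp only [Matrix.mul_apply, Matrix.transpose_apply, Matrix.map_apply,
      Matrix.kroneckerMap_apply, Matrix.one_apply, Fintype.sum_prod_type]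
    simp [hZ₀, apply_ite, Finset.sum_ite_eq, Finset.sum_ite_eq', mul_assoc]
    exact Finset.sum_congr rfl fun x _ => by ring
  -- expand LHS
  conv_lhs =>
    simp only [Matrix.trace, Matrix.diag, Matrix.mul_apply, Matrix.map_apply,
      Matrix.transpose_apply, map_sum, _root_.map_mul, hU, hτ', Complex.ofReal_sum,
      Complex.ofReal_mul, Finset.sum_mul, Finset.mul_sum]
  -- expand RHS
  conv_rhs =>
    simp only [dotProduct, Matrix.mulVec, Fintype.sum_prod_type, hZ, hφ',
      Finset.sum_mul, Finset.mul_sum]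
  trans (∑ x : Fin d × Fin n × Fin n × Fin m × Fin m × Fin d × Fin d,
      ((c x.2.2.2.2.1 x.2.2.2.2.2.2 x.2.1 : ℝ) : ℂ) * (G x.1 x.2.2.2.2.2.2 : ℂ) *
        ((ψ x.1) (M x.2.2.2.2.1 x.2.2.2.1) : ℂ) *
        (((c x.2.2.2.1 x.2.2.2.2.2.1 x.2.2.1 : ℝ) : ℂ) * (G x.1 x.2.2.2.2.2.1 : ℂ)) *
        τ x.1 x.2.1 x.2.2.1)
  · simp only [Fintype.sum_prod_type]
  trans (∑ y : Fin n × Fin d × Fin m × Fin n × Fin d × Fin m × Fin d,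
      (c y.2.2.1 y.2.1 y.1 : ℂ) *
        ((G y.2.2.2.2.2.2 y.2.1 : ℂ) * (G y.2.2.2.2.2.2 y.2.2.2.2.1 : ℂ) *
          (τ y.2.2.2.2.2.2 y.1 y.2.2.2.1 * ((ψ y.2.2.2.2.2.2) (M y.2.2.1 y.2.2.2.2.2.1) : ℂ)) *
          (c y.2.2.2.2.2.1 y.2.2.2.2.1 y.2.2.2.1 : ℂ)))
  · refine Fintype.sum_equiv
      ⟨fun x => (x.2.1, x.2.2.2.2.2.2, x.2.2.2.2.1, x.2.2.1, x.2.2.2.2.2.1, x.2.2.2.1, x.1),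
       fun y => (y.2.2.2.2.2.2, y.1, y.2.2.2.1, y.2.2.2.2.2.1, y.2.2.1, y.2.2.2.2.1, y.2.1),
       fun ⟨w,i,j,t,s,q,p⟩ => rfl, fun ⟨i,p,s,j,q,t,w⟩ => rfl⟩ _ _ ?_
    rintro ⟨w,i,j,t,s,q,p⟩
    dsimp only [Equiv.coe_fn_mk]
    push_cast
    ring
  · simp only [Fintype.sum_prod_type]
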